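/- Let C1, C2 be real numbers with 0 < C1 ≤ 1 and 0 < C2 ≤ 1, let m ≥ 1 be a natural number, and let (s_m, t_m) be the SimRank iterates on K_{m,2} (s_m 0 = t_m 0 = 0, s_m (k+1) = C2·(1 + (m-1)·t_m k)/m, t_m (k+1) = (C1/2)·(1 + s_m k)). Then the sequence s_m converges to (2·C2 + C1·C2·(m-1)) / (2·m − C1·C2·(m-1)). -/

import Mathlib

theorem simrank_Km2_limit
    (C1 C2 : ℝ) (hC1 : 0 < C1) (hC1' : C1 ≤ 1) (hC2 : 0 < C2) (hC2' : C2 ≤ 1)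
    (m : ℕ) (hm : 1 ≤ m)
    (sm tm : ℕ → ℝ)
    (hsm0 : sm 0 = 0) (htm0 : tm 0 = 0)
    (hsm : ∀ k, sm (k + 1) = C2 * (1 + ((m : ℝ) - 1) * tm k) / m)
    (htm : ∀ k, tm (k + 1) = (C1 / 2) * (1 + sm k)) :
    Filter.Tendsto sm Filter.atTop
      (nhds ((2 * C2 + C1 * C2 * ((m : ℝ) - 1)) /
             (2 * (m : ℝ) - C1 * C2 * ((m : ℝ) - 1)))) := by
  have hm0 : (0:ℝ) < (m:ℝ) := by exact_mod_cast Nat.lt_of_lt_of_le Nat.zero_lt_one hm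
  have hm1 : (1:ℝ) ≤ (m:ℝ) := by exact_mod_cast hm
  set L : ℝ := (2 * C2 + C1 * C2 * ((m : ℝ) - 1)) / (2 * (m : ℝ) - C1 * C2 * ((m : ℝ) - 1))
    with hL
  set r : ℝ := C1 * C2 * ((m : ℝ) - 1) / (2 * (m : ℝ)) with hr
  have hnum : C1 * C2 * ((m:ℝ) - 1) < 2 * (m:ℝ) := by
    have h1 : C1 * C2 ≤ 1 := mul_le_one₀ hC1' (le_of_lt hC2) hC2'
    have h2 : C1 * C2 * ((m:ℝ) - 1) ≤ 1 * ((m:ℝ) - 1) :=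
      mul_le_mul_of_nonneg_right h1 (by linarith)
    nlinarith
  have hnum0 : 0 ≤ C1 * C2 * ((m:ℝ) - 1) := by
    have : 0 ≤ C1 * C2 := le_of_lt (mul_pos hC1 hC2)
    nlinarith
  have hD : 2 * (m:ℝ) - C1 * C2 * ((m:ℝ) - 1) ≠ 0 := by nlinarith
  have hr0 : 0 ≤ r := by
    apply div_nonneg hnum0; linarith
  have hr1 : r < 1 := by
    rw [hr, div_lt_one (by linarith)]; exact hnum
  -- key two-step recursion for the error
  have key : ∀ k, sm (k + 2) - L = r * (sm k - L) := by
    intro k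
    have h1 := hsm (k + 1)
    rw [htm k] at h1
    have e : L * (2 * (m:ℝ) - C1 * C2 * ((m:ℝ) - 1)) = 2 * C2 + C1 * C2 * ((m : ℝ) - 1) :=
      div_mul_cancel₀ _ hD
    rw [show k + 2 = (k + 1) + 1 from rfl, h1, hr]
    field_simp
    linear_combination (-1) * e
  set q : ℝ := max (Real.sqrt r) (1/2) with hq
  have hq0 : 0 < q := lt_of_lt_of_le (by norm_num) (le_max_right _ _)
  have hq1 : q < 1 := by
    apply max_lt _ (by norm_num)
    rw [show (1:ℝ) = Real.sqrt 1 from (Real.sqrt_one).symm]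
    exact Real.sqrt_lt_sqrt hr0 hr1
  have hrq : r ≤ q ^ 2 := by
    have h1 : Real.sqrt r ≤ q := le_max_left _ _
    have := Real.sq_sqrt hr0
    nlinarith [Real.sqrt_nonneg r]
  set M : ℝ := max (|sm 0 - L|) (|sm 1 - L| / q) with hM
  have hbound : ∀ k, |sm k - L| ≤ M * q ^ k ∧ |sm (k + 1) - L| ≤ M * q ^ (k + 1) := by
    intro k
    induction k with
    | zero =>
      constructor
      · rw [pow_zero, mul_one]; exact le_max_left _ _
      · have h := le_max_right (|sm 0 - L|) (|sm 1 - L| / q)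
        rw [div_le_iff₀ hq0] at h
        simpa [mul_comm] using h
    | succ n ih =>
      refine ⟨ih.2, ?_⟩
      have h := key n
      have : |sm (n + 2) - L| = r * |sm n - L| := by
        rw [h, abs_mul, abs_of_nonneg hr0]
      rw [show n + 1 + 1 = n + 2 from rfl, this]
      have h2 : r * |sm n - L| ≤ q ^ 2 * (M * q ^ n) := by
        apply mul_le_mul hrq ih.1 (abs_nonneg _) (by positivity)
      calc r * |sm n - L| ≤ q ^ 2 * (M * q ^ n) := h2
        _ = M * q ^ (n + 2) := by ring
  have hM0 : 0 ≤ M := le_trans (abs_nonneg _) (le_max_left _ _)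
  have htend : Filter.Tendsto (fun k => M * q ^ k) Filter.atTop (nhds 0) := by
    have := tendsto_pow_atTop_nhds_zero_of_lt_one (le_of_lt hq0) hq1
    simpa using this.const_mul M
  rw [tendsto_iff_dist_tendsto_zero]
  apply squeeze_zero (fun n => dist_nonneg) _ htend
  intro n
  rw [Real.dist_eq]
  exact (hbound n).1
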